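/- Coupling lemma for the marginal polytope: let P, P' be probability distributions on S×Y×Z (finite). For any Q ∈ Δ_P there exists Q' ∈ Δ_{P'} with ‖Q − Q'‖₁ ≤ 5‖P − P'‖₁, where Δ_R denotes the set of joint distributions whose (S,Y)- and (S,Z)-marginals agree with those of R. -/

import Mathlib

open Finset Real

section Defs
variable {α β γ : Type*} [Fintype α] [Fintype β] [Fintype γ]

/-- `p` is a probability distribution on a finite type. -/
def IsDist (p : α → ℝ) : Prop := (∀ a, 0 ≤ p a) ∧ ∑ a, p a = 1

/-- `k` is a channel (stochastic matrix): each row is a distribution. -/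
def IsChannel (k : α → β → ℝ) : Prop := ∀ a, IsDist (k a)

/-- Kullback–Leibler divergence (base 2) between distributions on a finite type. -/
noncomputable def klDiv2 (p q : α → ℝ) : ℝ := ∑ a, p a * Real.logb 2 (p a / q a)

/-- Channel composition: `(chComp lam mu) a c = ∑ b, lam b c * mu a b`. -/
def chComp (lam : β → γ → ℝ) (mu : α → β → ℝ) : α → γ → ℝ :=
  fun a c => ∑ b, lam b c * mu a b

/-- Conditional (weighted) KL divergence `D(k ∥ k' | pi)`. -/
noncomputable def condKL (pi : α → ℝ) (k k' : α → β → ℝ) : ℝ :=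
  ∑ a, pi a * klDiv2 (k a) (k' a)

/-- Weighted output deficiency `δ_o^π(μ,κ) = inf_λ D(κ ∥ λ∘μ | π)`. -/
noncomputable def defOut (pi : α → ℝ) (mu : α → γ → ℝ) (kap : α → β → ℝ) : ℝ :=
  sInf {d | ∃ lam : γ → β → ℝ, IsChannel lam ∧ d = condKL pi kap (chComp lam mu)}

/-- Risk of a fixed strategy `rho` used after observing through channel `nu`. -/
noncomputable def riskWith {S O A : Type*} [Fintype S] [Fintype O] [Fintype A]
    (pi : S → ℝ) (nu : S → O → ℝ) (rho : O → A → ℝ) (l : S → A → ℝ) : ℝ :=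
  ∑ s, pi s * ∑ a, chComp rho nu s a * l s a

/-- Optimal Bayes risk `R(π,ν,ℓ)`. -/
noncomputable def bayesRisk {S O A : Type*} [Fintype S] [Fintype O] [Fintype A]
    (pi : S → ℝ) (nu : S → O → ℝ) (l : S → A → ℝ) : ℝ :=
  sInf {r | ∃ rho : O → A → ℝ, IsChannel rho ∧ r = riskWith pi nu rho l}

/-- Total variation distance between distributions on a finite type. -/
noncomputable def tvDist (p q : α → ℝ) : ℝ := (∑ a, |p a - q a|) / 2

end Defs

section Joint
variable {S Y Z : Type*} [Fintype S] [Fintype Y] [Fintype Z]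

noncomputable def margSY (P : S × Y × Z → ℝ) : S × Y → ℝ := fun p => ∑ z, P (p.1, p.2, z)
noncomputable def margSZ (P : S × Y × Z → ℝ) : S × Z → ℝ := fun p => ∑ y, P (p.1, y, p.2)
noncomputable def margYZ (P : S × Y × Z → ℝ) : Y × Z → ℝ := fun p => ∑ s, P (s, p.1, p.2)
noncomputable def margS (P : S × Y × Z → ℝ) : S → ℝ := fun s => ∑ y, ∑ z, P (s, y, z)
noncomputable def margY (P : S × Y × Z → ℝ) : Y → ℝ := fun y => ∑ s, ∑ z, P (s, y, z)
noncomputable def margZ (P : S × Y × Z → ℝ) : Z → ℝ := fun z => ∑ s, ∑ y, P (s, y, z)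

/-- Mutual information `I(S;Y)` (base 2) of the (S,Y)-marginal of `P`. -/
noncomputable def miSY (P : S × Y × Z → ℝ) : ℝ :=
  ∑ s, ∑ y, margSY P (s, y) * Real.logb 2 (margSY P (s, y) / (margS P s * margY P y))

/-- Mutual information `I(S;Z)` (base 2) of the (S,Z)-marginal of `P`. -/
noncomputable def miSZ (P : S × Y × Z → ℝ) : ℝ :=
  ∑ s, ∑ z, margSZ P (s, z) * Real.logb 2 (margSZ P (s, z) / (margS P s * margZ P z))

/-- Conditional mutual information `I(S;Y|Z)` (base 2) under `P`. -/
noncomputable def condMI (P : S × Y × Z → ℝ) : ℝ :=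
  ∑ s, ∑ y, ∑ z,
    P (s, y, z) * Real.logb 2 (P (s, y, z) * margZ P z / (margSZ P (s, z) * margYZ P (y, z)))

/-- The feasible set `Δ_P`: joint distributions with the same (S,Y)- and (S,Z)-marginals as `P`. -/
def marginalPolytope (P : S × Y × Z → ℝ) : Set (S × Y × Z → ℝ) :=
  {Q | IsDist Q ∧ margSY Q = margSY P ∧ margSZ Q = margSZ P}

/-- Minimum-synergy unique information `UI(S;Y\Z) = inf_{Q ∈ Δ_P} I_Q(S;Y|Z)`. -/
noncomputable def UI (P : S × Y × Z → ℝ) : ℝ :=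
  sInf (condMI '' marginalPolytope P)

noncomputable def condYgivenS (P : S × Y × Z → ℝ) : S → Y → ℝ :=
  fun s y => margSY P (s, y) / margS P s
noncomputable def condZgivenS (P : S × Y × Z → ℝ) : S → Z → ℝ :=
  fun s z => margSZ P (s, z) / margS P s
noncomputable def condSgivenY (P : S × Y × Z → ℝ) : Y → S → ℝ :=
  fun y s => margSY P (s, y) / margY P y
noncomputable def condSgivenZ (P : S × Y × Z → ℝ) : Z → S → ℝ :=
  fun z s => margSZ P (s, z) / margZ P z

/-- Weighted input deficiency `δ_i^π(μ̄,κ̄) = inf_{λ̄} ∑_y π_Y(y) D(κ̄_y ∥ (μ̄∘λ̄)_y)`. -/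
noncomputable def defIn {Y' Z' S' : Type*} [Fintype Y'] [Fintype Z'] [Fintype S']
    (piY : Y' → ℝ) (mub : Z' → S' → ℝ) (kab : Y' → S' → ℝ) : ℝ :=
  sInf {d | ∃ lb : Y' → Z' → ℝ, IsChannel lb ∧
    d = ∑ y, piY y * klDiv2 (kab y) (chComp mub lb y)}

end Joint


namespace MPCoupling

variable {Y Z : Type*} [Fintype Y] [Fintype Z]

/-- Rescale each row of `q` so its sum becomes `min (a' w) (old row sum)`. -/
noncomputable def shrink {W T : Type*} [Fintype T] (a' : W → ℝ) (q : W → T → ℝ)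
    (w : W) (t : T) : ℝ :=
  q w t * (min (a' w) (∑ u, q w u) / ∑ u, q w u)

section Shrink
variable {W T : Type*} [Fintype T] (a' : W → ℝ) (q : W → T → ℝ) (w : W)

lemma shrink_nonneg (hq : ∀ t, 0 ≤ q w t) (ha : 0 ≤ a' w) (t : T) :
    0 ≤ shrink a' q w t := by
  have hr : 0 ≤ ∑ u, q w u := Finset.sum_nonneg fun u _ => hq u
  exact mul_nonneg (hq t) (div_nonneg (le_min ha hr) hr)

lemma shrink_le (hq : ∀ t, 0 ≤ q w t) (ha : 0 ≤ a' w) (t : T) :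
    shrink a' q w t ≤ q w t := by
  rcases eq_or_ne (∑ u, q w u) 0 with h0 | h0
  · have hz : q w t = 0 := by
      have := (Finset.sum_eq_zero_iff_of_nonneg (fun u _ => hq u)).mp h0
      exact this t (Finset.mem_univ t)
    simp [shrink, hz]
  · have hr : 0 < ∑ u, q w u :=
      lt_of_le_of_ne (Finset.sum_nonneg fun u _ => hq u) (Ne.symm h0)
    have : min (a' w) (∑ u, q w u) / ∑ u, q w u ≤ 1 := by
      rw [div_le_one hr]; exact min_le_right _ _
    calc shrink a' q w t ≤ q w t * 1 := mul_le_mul_of_nonneg_left this (hq t)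
    _ = q w t := mul_one _

lemma sum_shrink (hq : ∀ t, 0 ≤ q w t) (ha : 0 ≤ a' w) :
    ∑ t, shrink a' q w t = min (a' w) (∑ u, q w u) := by
  rcases eq_or_ne (∑ u, q w u) 0 with h0 | h0
  · simp [shrink, h0, min_eq_right ha]
  · rw [show (∑ t, shrink a' q w t) = (∑ t, q w t) * (min (a' w) (∑ u, q w u) / ∑ u, q w u)
      from (Finset.sum_mul _ _ _).symm]
    field_simp

end Shrink

end MPCoupling

namespace MPCoupling

section Couple
variable {Y Z : Type*} [Fintype Y] [Fintype Z]
variable (a' : Y → ℝ) (b' : Z → ℝ) (q : Y → Z → ℝ)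

noncomputable def q1 : Y → Z → ℝ := shrink a' q
noncomputable def q2 (y : Y) (z : Z) : ℝ := shrink b' (fun z' y' => q1 a' q y' z') z y
noncomputable def dd (y : Y) : ℝ := a' y - ∑ z, q2 a' b' q y z
noncomputable def ee (z : Z) : ℝ := b' z - ∑ y, q2 a' b' q y z
noncomputable def Dt : ℝ := ∑ y, dd a' b' q y
noncomputable def couple (y : Y) (z : Z) : ℝ :=
  q2 a' b' q y z + dd a' b' q y * ee a' b' q z / Dt a' b' q

variable (hq : ∀ y z, 0 ≤ q y z) (ha : ∀ y, 0 ≤ a' y) (hb : ∀ z, 0 ≤ b' z)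
include hq ha

lemma q1_nonneg (y : Y) (z : Z) : 0 ≤ q1 a' q y z :=
  shrink_nonneg a' q y (hq y) (ha y) z

lemma q1_le (y : Y) (z : Z) : q1 a' q y z ≤ q y z :=
  shrink_le a' q y (hq y) (ha y) z

lemma sum_q1 (y : Y) : ∑ z, q1 a' q y z = min (a' y) (∑ z, q y z) :=
  sum_shrink a' q y (hq y) (ha y)

include hb

lemma q2_nonneg (y : Y) (z : Z) : 0 ≤ q2 a' b' q y z :=
  shrink_nonneg b' _ z (fun y' => q1_nonneg a' q hq ha y' z) (hb z) y

lemma q2_le (y : Y) (z : Z) : q2 a' b' q y z ≤ q1 a' q y z :=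
  shrink_le b' _ z (fun y' => q1_nonneg a' q hq ha y' z) (hb z) y

lemma sum_q2_col (z : Z) : ∑ y, q2 a' b' q y z = min (b' z) (∑ y, q1 a' q y z) :=
  sum_shrink b' _ z (fun y' => q1_nonneg a' q hq ha y' z) (hb z)

lemma dd_nonneg (y : Y) : 0 ≤ dd a' b' q y := by
  have h1 : ∑ z, q2 a' b' q y z ≤ ∑ z, q1 a' q y z :=
    Finset.sum_le_sum fun z _ => q2_le a' b' q hq ha hb y z
  have h2 : ∑ z, q1 a' q y z ≤ a' y := by
    rw [sum_q1 a' q hq ha]; exact min_le_left _ _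
  simpa [dd] using h1.trans h2

lemma ee_nonneg (z : Z) : 0 ≤ ee a' b' q z := by
  have : ∑ y, q2 a' b' q y z ≤ b' z := by
    rw [sum_q2_col a' b' q hq ha hb]; exact min_le_left _ _
  simpa [ee] using this

lemma Dt_nonneg : 0 ≤ Dt a' b' q :=
  Finset.sum_nonneg fun y _ => dd_nonneg a' b' q hq ha hb y

lemma couple_nonneg (y : Y) (z : Z) : 0 ≤ couple a' b' q y z :=
  add_nonneg (q2_nonneg a' b' q hq ha hb y z)
    (div_nonneg (mul_nonneg (dd_nonneg a' b' q hq ha hb y) (ee_nonneg a' b' q hq ha hb z))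
      (Dt_nonneg a' b' q hq ha hb))

omit hq ha hb in
lemma sum_ee (hab : ∑ y, a' y = ∑ z, b' z) : ∑ z, ee a' b' q z = Dt a' b' q := by
  unfold ee Dt dd
  rw [Finset.sum_sub_distrib, Finset.sum_sub_distrib, hab, Finset.sum_comm]

end Couple

end MPCoupling

namespace MPCoupling

section Couple2
variable {Y Z : Type*} [Fintype Y] [Fintype Z]
variable (a' : Y → ℝ) (b' : Z → ℝ) (q : Y → Z → ℝ)
variable (hq : ∀ y z, 0 ≤ q y z) (ha : ∀ y, 0 ≤ a' y) (hb : ∀ z, 0 ≤ b' z)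
  (hab : ∑ y, a' y = ∑ z, b' z)
include hq ha hb hab

lemma sum_couple_row (y : Y) : ∑ z, couple a' b' q y z = a' y := by
  have hrow : ∑ z, couple a' b' q y z
      = (∑ z, q2 a' b' q y z) + dd a' b' q y * Dt a' b' q / Dt a' b' q := by
    unfold couple
    rw [Finset.sum_add_distrib]
    congr 1
    simp_rw [div_eq_mul_inv, ← Finset.sum_mul, ← Finset.mul_sum,
      sum_ee a' b' q hab]
  rcases eq_or_ne (Dt a' b' q) 0 with h0 | h0
  · have hdd : dd a' b' q y = 0 := by
      have := (Finset.sum_eq_zero_iff_of_nonneg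
        (fun y' _ => dd_nonneg a' b' q hq ha hb y')).mp h0
      exact this y (Finset.mem_univ y)
    have : ∑ z, q2 a' b' q y z = a' y := by
      have := hdd; unfold dd at this; linarith
    rw [hrow, hdd, this]; ring
  · rw [hrow, mul_div_assoc, div_self h0, mul_one]
    unfold dd; ring

lemma sum_couple_col (z : Z) : ∑ y, couple a' b' q y z = b' z := by
  have hcol : ∑ y, couple a' b' q y z
      = (∑ y, q2 a' b' q y z) + Dt a' b' q * ee a' b' q z / Dt a' b' q := by
    unfold couple
    rw [Finset.sum_add_distrib]
    congr 1
    simp_rw [div_eq_mul_inv, ← Finset.sum_mul]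
    rfl
  rcases eq_or_ne (Dt a' b' q) 0 with h0 | h0
  · have hee : ee a' b' q z = 0 := by
      have hsum : ∑ z', ee a' b' q z' = 0 := by
        rw [sum_ee a' b' q hab, h0]
      have := (Finset.sum_eq_zero_iff_of_nonneg
        (fun z' _ => ee_nonneg a' b' q hq ha hb z')).mp hsum
      exact this z (Finset.mem_univ z)
    have hq2 : ∑ y, q2 a' b' q y z = b' z := by
      have := hee; unfold ee at this; linarith
    rw [hcol, hee, hq2]; ring
  · rw [hcol, mul_comm, mul_div_assoc, div_self h0, mul_one]
    unfold ee; ring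

lemma dist_couple :
    ∑ y, ∑ z, |q y z - couple a' b' q y z|
      ≤ 3 * (∑ y, |a' y - ∑ z, q y z|) + 2 * ∑ z, |b' z - ∑ y, q y z| := by
  set A := ∑ y, |a' y - ∑ z, q y z| with hA
  set B := ∑ z, |b' z - ∑ y, q y z| with hB
  set Ta := ∑ y, ∑ z, (q y z - q2 a' b' q y z) with hTa
  have e1 : ∀ y, ∑ z, (q y z - q1 a' q y z)
      = ∑ z, q y z - min (a' y) (∑ z, q y z) := by
    intro y; rw [Finset.sum_sub_distrib, sum_q1 a' q hq ha]
  have e2 : ∀ z, ∑ y, (q1 a' q y z - q2 a' b' q y z)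
      = (∑ y, q1 a' q y z) - min (b' z) (∑ y, q1 a' q y z) := by
    intro z; rw [Finset.sum_sub_distrib, sum_q2_col a' b' q hq ha hb]
  have hsplit : Ta = (∑ y, (∑ z, q y z - min (a' y) (∑ z, q y z)))
      + ∑ z, ((∑ y, q1 a' q y z) - min (b' z) (∑ y, q1 a' q y z)) := by
    rw [hTa]
    have hpt : ∀ y z, q y z - q2 a' b' q y z
        = (q y z - q1 a' q y z) + (q1 a' q y z - q2 a' b' q y z) := by
      intros; ring
    simp_rw [hpt, Finset.sum_add_distrib]
    congr 1
    · exact Finset.sum_congr rfl fun y _ => e1 y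
    · rw [Finset.sum_comm]
      exact Finset.sum_congr rfl fun z _ => e2 z
  have h1 : ∀ y, ∑ z, q y z - min (a' y) (∑ z, q y z) ≤ |a' y - ∑ z, q y z| := by
    intro y
    rcases le_total (a' y) (∑ z, q y z) with h | h
    · rw [min_eq_left h, abs_of_nonpos (by linarith)]; linarith
    · rw [min_eq_right h]; simp [abs_nonneg]
  have h2 : ∀ z, (∑ y, q1 a' q y z) - min (b' z) (∑ y, q1 a' q y z)
      ≤ |b' z - ∑ y, q y z| := by
    intro z
    have hc1 : ∑ y, q1 a' q y z ≤ ∑ y, q y z :=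
      Finset.sum_le_sum fun y _ => q1_le a' q hq ha y z
    rcases le_total (b' z) (∑ y, q1 a' q y z) with h | h
    · rw [min_eq_left h, abs_of_nonpos (by linarith)]; linarith
    · rw [min_eq_right h]; simp [abs_nonneg]
  have hTa_le : Ta ≤ A + B := by
    rw [hsplit]
    exact add_le_add (Finset.sum_le_sum fun y _ => h1 y)
      (Finset.sum_le_sum fun z _ => h2 z)
  have hDt_eq : ∑ y, ∑ z, (couple a' b' q y z - q2 a' b' q y z) = Dt a' b' q := by
    have hpt : ∀ y z, couple a' b' q y z - q2 a' b' q y z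
        = dd a' b' q y * ee a' b' q z / Dt a' b' q := by
      intro y z; unfold couple; ring
    rcases eq_or_ne (Dt a' b' q) 0 with h0 | h0
    · have hdd : ∀ y, dd a' b' q y = 0 := fun y =>
        (Finset.sum_eq_zero_iff_of_nonneg
          (fun y' _ => dd_nonneg a' b' q hq ha hb y')).mp h0 y (Finset.mem_univ y)
      simp [hpt, hdd, h0]
    · simp_rw [hpt, div_eq_mul_inv]
      have hrow : ∀ y : Y, ∑ z : Z, dd a' b' q y * ee a' b' q z * (Dt a' b' q)⁻¹
          = dd a' b' q y := by
        intro y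
        rw [← Finset.sum_mul, ← Finset.mul_sum, sum_ee a' b' q hab, mul_assoc,
          mul_inv_cancel₀ h0, mul_one]
      simp_rw [hrow]
      rfl
  have hDt_le : Dt a' b' q ≤ A + Ta := by
    have heq : Dt a' b' q = (∑ y, (a' y - ∑ z, q y z)) + Ta := by
      rw [hTa]
      unfold Dt dd
      rw [← Finset.sum_add_distrib]
      refine Finset.sum_congr rfl fun y _ => ?_
      rw [Finset.sum_sub_distrib]; ring
    rw [heq, hA]
    have : (∑ y, (a' y - ∑ z, q y z)) ≤ ∑ y, |a' y - ∑ z, q y z| :=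
      Finset.sum_le_sum fun y _ => le_abs_self _
    linarith
  have hpt2 : ∀ y z, |q y z - couple a' b' q y z|
      ≤ (q y z - q2 a' b' q y z) + (couple a' b' q y z - q2 a' b' q y z) := by
    intro y z
    have h1' : q2 a' b' q y z ≤ q y z :=
      (q2_le a' b' q hq ha hb y z).trans (q1_le a' q hq ha y z)
    have h2' : q2 a' b' q y z ≤ couple a' b' q y z := by
      unfold couple
      have : 0 ≤ dd a' b' q y * ee a' b' q z / Dt a' b' q :=
        div_nonneg (mul_nonneg (dd_nonneg a' b' q hq ha hb y)
          (ee_nonneg a' b' q hq ha hb z)) (Dt_nonneg a' b' q hq ha hb)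
      linarith
    rw [abs_sub_le_iff]
    constructor <;> linarith
  calc ∑ y, ∑ z, |q y z - couple a' b' q y z|
      ≤ ∑ y, ∑ z, ((q y z - q2 a' b' q y z) + (couple a' b' q y z - q2 a' b' q y z)) :=
        Finset.sum_le_sum fun y _ => Finset.sum_le_sum fun z _ => hpt2 y z
    _ = Ta + Dt a' b' q := by
        simp_rw [Finset.sum_add_distrib]
        rw [hDt_eq, hTa]
    _ ≤ (A + B) + (A + (A + B)) := by
        have := hDt_le.trans (add_le_add (le_refl A) hTa_le)
        linarith
    _ = 3 * A + 2 * B := by ring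

end Couple2

end MPCoupling

/-- coupling lemma for the marginal polytope. -/
theorem marginalPolytope_coupling
    {S Y Z : Type*} [Fintype S] [Fintype Y] [Fintype Z]
    (P P' : S × Y × Z → ℝ) (hP : IsDist P) (hP' : IsDist P') :
    ∀ Q ∈ marginalPolytope P, ∃ Q' ∈ marginalPolytope P',
      ∑ x, |Q x - Q' x| ≤ 5 * ∑ x, |P x - P' x| := by
  intro Q hQ
  obtain ⟨⟨hQ0, hQ1⟩, hQSY, hQSZ⟩ := hQ
  set a' : S → Y → ℝ := fun s y => margSY P' (s, y) with ha'def
  set b' : S → Z → ℝ := fun s z => margSZ P' (s, z) with hb'def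
  set q : S → Y → Z → ℝ := fun s y z => Q (s, y, z) with hqdef
  have hq : ∀ s y z, 0 ≤ q s y z := fun s y z => hQ0 _
  have ha : ∀ s y, 0 ≤ a' s y := fun s y =>
    Finset.sum_nonneg fun z _ => hP'.1 _
  have hb : ∀ s z, 0 ≤ b' s z := fun s z =>
    Finset.sum_nonneg fun y _ => hP'.1 _
  have hab : ∀ s, ∑ y, a' s y = ∑ z, b' s z := fun s => Finset.sum_comm
  set Q' : S × Y × Z → ℝ :=
    fun x => MPCoupling.couple (a' x.1) (b' x.1) (q x.1) x.2.1 x.2.2 with hQ'def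
  have hrow : ∀ s y, ∑ z, Q' (s, y, z) = a' s y := fun s y =>
    MPCoupling.sum_couple_row (a' s) (b' s) (q s) (hq s) (ha s) (hb s) (hab s) y
  have hcol : ∀ s z, ∑ y, Q' (s, y, z) = b' s z := fun s z =>
    MPCoupling.sum_couple_col (a' s) (b' s) (q s) (hq s) (ha s) (hb s) (hab s) z
  have hmSY : margSY Q' = margSY P' := by
    funext p
    exact hrow p.1 p.2
  have hmSZ : margSZ Q' = margSZ P' := by
    funext p
    exact hcol p.1 p.2
  refine ⟨Q', ⟨⟨fun x => MPCoupling.couple_nonneg (a' x.1) (b' x.1) (q x.1)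
      (hq x.1) (ha x.1) (hb x.1) x.2.1 x.2.2, ?_⟩, hmSY, hmSZ⟩, ?_⟩
  · -- total mass 1
    have h1 : ∑ x : S × Y × Z, Q' x = ∑ s, ∑ y, ∑ z, Q' (s, y, z) := by
      rw [Fintype.sum_prod_type]
      exact Finset.sum_congr rfl fun s _ => Fintype.sum_prod_type _
    have h2 : ∑ x : S × Y × Z, P' x = ∑ s, ∑ y, ∑ z, P' (s, y, z) := by
      rw [Fintype.sum_prod_type]
      exact Finset.sum_congr rfl fun s _ => Fintype.sum_prod_type _
    rw [h1]
    simp_rw [hrow]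
    rw [ha'def]
    calc ∑ s, ∑ y, margSY P' (s, y) = ∑ x : S × Y × Z, P' x := by
          rw [h2]
          exact Finset.sum_congr rfl fun s _ => rfl
      _ = 1 := hP'.2
  · -- distance bound
    set T := ∑ x : S × Y × Z, |P x - P' x| with hT
    have hsplitT : T = ∑ s, ∑ y, ∑ z, |P (s, y, z) - P' (s, y, z)| := by
      rw [hT, Fintype.sum_prod_type]
      exact Finset.sum_congr rfl fun s _ => Fintype.sum_prod_type _
    have hkey : ∀ s, ∑ y, ∑ z, |q s y z - MPCoupling.couple (a' s) (b' s) (q s) y z|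
        ≤ 3 * (∑ y, ∑ z, |P (s, y, z) - P' (s, y, z)|)
          + 2 * ∑ z, ∑ y, |P (s, y, z) - P' (s, y, z)| := by
      intro s
      have hd := MPCoupling.dist_couple (a' s) (b' s) (q s) (hq s) (ha s) (hb s) (hab s)
      have hA : ∀ y, |a' s y - ∑ z, q s y z| ≤ ∑ z, |P (s, y, z) - P' (s, y, z)| := by
        intro y
        have hqP : ∑ z, q s y z = margSY P (s, y) := by
          rw [← hQSY]; rfl
        rw [hqP, ha'def]
        have : margSY P' (s, y) - margSY P (s, y)
            = ∑ z, (P' (s, y, z) - P (s, y, z)) := by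
          rw [Finset.sum_sub_distrib]; rfl
        rw [this]
        calc |∑ z, (P' (s, y, z) - P (s, y, z))| ≤ ∑ z, |P' (s, y, z) - P (s, y, z)| :=
              Finset.abs_sum_le_sum_abs _ _
          _ = ∑ z, |P (s, y, z) - P' (s, y, z)| := by
              exact Finset.sum_congr rfl fun z _ => abs_sub_comm _ _
      have hB : ∀ z, |b' s z - ∑ y, q s y z| ≤ ∑ y, |P (s, y, z) - P' (s, y, z)| := by
        intro z
        have hqP : ∑ y, q s y z = margSZ P (s, z) := by
          rw [← hQSZ]; rfl
        rw [hqP, hb'def]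
        have : margSZ P' (s, z) - margSZ P (s, z)
            = ∑ y, (P' (s, y, z) - P (s, y, z)) := by
          rw [Finset.sum_sub_distrib]; rfl
        rw [this]
        calc |∑ y, (P' (s, y, z) - P (s, y, z))| ≤ ∑ y, |P' (s, y, z) - P (s, y, z)| :=
              Finset.abs_sum_le_sum_abs _ _
          _ = ∑ y, |P (s, y, z) - P' (s, y, z)| := by
              exact Finset.sum_congr rfl fun y _ => abs_sub_comm _ _
      refine hd.trans ?_
      have h3 : ∑ y, |a' s y - ∑ z, q s y z| ≤ ∑ y, ∑ z, |P (s, y, z) - P' (s, y, z)| :=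
        Finset.sum_le_sum fun y _ => hA y
      have h4 : ∑ z, |b' s z - ∑ y, q s y z| ≤ ∑ z, ∑ y, |P (s, y, z) - P' (s, y, z)| :=
        Finset.sum_le_sum fun z _ => hB z
      linarith
    have hLHS : ∑ x : S × Y × Z, |Q x - Q' x|
        = ∑ s, ∑ y, ∑ z, |q s y z - MPCoupling.couple (a' s) (b' s) (q s) y z| := by
      rw [Fintype.sum_prod_type]
      exact Finset.sum_congr rfl fun s _ => Fintype.sum_prod_type _
    rw [hLHS]
    have hsum : ∑ s, (3 * (∑ y, ∑ z, |P (s, y, z) - P' (s, y, z)|)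
        + 2 * ∑ z, ∑ y, |P (s, y, z) - P' (s, y, z)|) = 5 * T := by
      rw [Finset.sum_add_distrib, ← Finset.mul_sum, ← Finset.mul_sum, ← hsplitT]
      have : ∑ s, ∑ z, ∑ y, |P (s, y, z) - P' (s, y, z)| = T := by
        rw [hsplitT]
        exact Finset.sum_congr rfl fun s _ => Finset.sum_comm
      rw [this]; ring
    calc ∑ s, ∑ y, ∑ z, |q s y z - MPCoupling.couple (a' s) (b' s) (q s) y z|
        ≤ ∑ s, (3 * (∑ y, ∑ z, |P (s, y, z) - P' (s, y, z)|)
          + 2 * ∑ z, ∑ y, |P (s, y, z) - P' (s, y, z)|) :=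
          Finset.sum_le_sum fun s _ => hkey s
      _ = 5 * T := hsum
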